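/- For every n ≥ 1 and 1 ≤ x ≤ n, the sum over all tuples (m₁,...,mₙ) of nonnegative integers with x ≤ Σᵢ i·mᵢ ≤ n of ∏ᵢ 1/(mᵢ!·i^{mᵢ}) equals n - x + 1. -/

import Mathlib

open Finset

namespace Stmt11Aux

noncomputable def w (N : ℕ) (m : Fin N → ℕ) : ℝ :=
  ∏ i : Fin N, (1 : ℝ) / (Nat.factorial (m i) * ((i : ℕ) + 1) ^ m i)

def wt (N : ℕ) (m : Fin N → ℕ) : ℕ := ∑ i : Fin N, ((i : ℕ) + 1) * m i

def T (N k : ℕ) : Finset (Fin N → ℕ) :=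
  (Fintype.piFinset fun _ : Fin N => Finset.range (N + 1)).filter (fun m => wt N m = k)

lemma entry_le {N k : ℕ} {m : Fin N → ℕ} (h : wt N m = k) (i : Fin N) :
    ((i : ℕ) + 1) * m i ≤ k := by
  subst h
  exact Finset.single_le_sum (f := fun j : Fin N => ((j : ℕ) + 1) * m j)
    (fun j _ => Nat.zero_le _) (mem_univ i)

lemma mem_T {N k : ℕ} (hk : k ≤ N) {m : Fin N → ℕ} :
    m ∈ T N k ↔ wt N m = k := by
  constructor
  · intro h; exact (mem_filter.mp h).2
  · intro h
    refine mem_filter.mpr ⟨Fintype.mem_piFinset.mpr fun i => ?_, h⟩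
    have h1 := entry_le h i
    have h2 : m i ≤ k := by nlinarith
    exact mem_range.mpr (lt_of_le_of_lt (h2.trans hk) (Nat.lt_succ_self N))

lemma wt_update (N : ℕ) (m : Fin N → ℕ) (i : Fin N) (a : ℕ) :
    wt N (Function.update m i a) = ((i : ℕ) + 1) * a + ∑ j ∈ univ.erase i, ((j : ℕ) + 1) * m j := by
  rw [wt, ← Finset.add_sum_erase _ _ (mem_univ i), Function.update_self]
  congr 1
  exact Finset.sum_congr rfl fun j hj => by
    rw [Function.update_of_ne (Finset.ne_of_mem_erase hj)]

lemma w_update (N : ℕ) (m : Fin N → ℕ) (i : Fin N) (a : ℕ) :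
    w N (Function.update m i a) =
      (1 : ℝ) / (Nat.factorial a * ((i : ℕ) + 1) ^ a) *
        ∏ j ∈ univ.erase i, (1 : ℝ) / (Nat.factorial (m j) * ((j : ℕ) + 1) ^ m j) := by
  rw [w, ← Finset.mul_prod_erase _ _ (mem_univ i), Function.update_self]
  congr 1
  exact Finset.prod_congr rfl fun j hj => by
    rw [Function.update_of_ne (Finset.ne_of_mem_erase hj)]

lemma step (N k : ℕ) (hk : k ≤ N) (i : Fin N) (hi : (i : ℕ) + 1 ≤ k) :
    ∑ m ∈ T N k, (((i : ℕ) + 1) * m i : ℝ) * w N m = ∑ m ∈ T N (k - ((i : ℕ) + 1)), w N m := by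
  have hk' : k - ((i : ℕ) + 1) ≤ N := le_trans (Nat.sub_le _ _) hk
  rw [← Finset.sum_filter_of_ne (p := fun m => m i ≠ 0)
    (by intro m _ hne h0; exact hne (by simp [h0]))]
  refine Finset.sum_nbij' (i := fun m => Function.update m i (m i - 1))
    (j := fun m => Function.update m i (m i + 1)) ?_ ?_ ?_ ?_ ?_
  · intro m hm
    obtain ⟨hmT, hmi⟩ := mem_filter.mp hm
    have hwt := (mem_T hk).mp hmT
    obtain ⟨c, hc⟩ : ∃ c, m i = c + 1 := ⟨m i - 1, by omega⟩
    have h5 := wt_update N m i (m i)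
    rw [Function.update_eq_self] at h5
    rw [mem_T hk', wt_update, hc]
    rw [hc] at h5
    have h6 : ((i : ℕ) + 1) * (c + 1) = ((i : ℕ) + 1) * c + ((i : ℕ) + 1) := by ring
    simp only [Nat.add_sub_cancel]
    omega
  · intro m hm
    have hwt := (mem_T hk').mp hm
    refine mem_filter.mpr ⟨(mem_T hk).mpr ?_, by simp [Function.update_self]⟩
    rw [wt_update]
    have h5 := wt_update N m i (m i)
    rw [Function.update_eq_self] at h5
    have h6 : ((i : ℕ) + 1) * (m i + 1) = ((i : ℕ) + 1) * (m i) + ((i : ℕ) + 1) := by ring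
    omega
  · intro m hm
    have hmi : m i ≠ 0 := (mem_filter.mp hm).2
    funext j
    rcases eq_or_ne j i with rfl | hji
    · simp [Function.update_self]; omega
    · simp [Function.update_of_ne hji]
  · intro m _
    funext j
    rcases eq_or_ne j i with rfl | hji
    · simp [Function.update_self]
    · simp [Function.update_of_ne hji]
  · intro m hm
    have hmi : m i ≠ 0 := (mem_filter.mp hm).2
    obtain ⟨c, hc⟩ : ∃ c, m i = c + 1 := ⟨m i - 1, by omega⟩
    rw [w_update, hc]
    rw [w, ← Finset.mul_prod_erase _ _ (mem_univ i), hc, ← mul_assoc]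
    congr 1
    have h1 : (Nat.factorial c : ℝ) ≠ 0 := Nat.cast_ne_zero.mpr (Nat.factorial_ne_zero c)
    have h2 : (((i : ℕ) : ℝ) + 1) ^ c ≠ 0 := pow_ne_zero _ (by positivity)
    rw [Nat.factorial_succ, pow_succ]
    push_cast
    field_simp

lemma T_zero (N : ℕ) : T N 0 = {fun _ => 0} := by
  ext m
  rw [mem_T (Nat.zero_le N), Finset.mem_singleton]
  constructor
  · intro h
    funext i
    have := entry_le h i
    simpa using Nat.le_zero.mp this
  · intro h; subst h; simp [wt]

lemma S_eq_one (N : ℕ) : ∀ k, k ≤ N → ∑ m ∈ T N k, w N m = 1 := by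
  intro k
  induction k using Nat.strong_induction_on with
  | _ k ih =>
    intro hk
    rcases Nat.eq_zero_or_pos k with rfl | hkpos
    · rw [T_zero]
      simp [w, Nat.factorial]
    · have key : (k : ℝ) * ∑ m ∈ T N k, w N m = (k : ℝ) := by
        calc (k : ℝ) * ∑ m ∈ T N k, w N m
            = ∑ m ∈ T N k, (∑ i : Fin N, (((i : ℕ) + 1) * m i : ℝ)) * w N m := by
              rw [Finset.mul_sum]
              refine Finset.sum_congr rfl fun m hm => ?_
              have := (mem_T hk).mp hm
              rw [wt] at this
              congr 1
              rw [← this]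
              push_cast
              ring
          _ = ∑ i : Fin N, ∑ m ∈ T N k, (((i : ℕ) + 1) * m i : ℝ) * w N m := by
              rw [Finset.sum_comm]
              exact Finset.sum_congr rfl fun m _ => by rw [Finset.sum_mul]
          _ = ∑ i : Fin N, (if (i : ℕ) + 1 ≤ k then (1 : ℝ) else 0) := by
              refine Finset.sum_congr rfl fun i _ => ?_
              by_cases hi : (i : ℕ) + 1 ≤ k
              · rw [if_pos hi, step N k hk i hi]
                exact ih _ (by omega) (by omega)
              · rw [if_neg hi]
                refine Finset.sum_eq_zero fun m hm => ?_
                have := entry_le ((mem_T hk).mp hm) i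
                have : m i = 0 := by nlinarith
                simp [this]
          _ = (k : ℝ) := by
              rw [Fin.sum_univ_eq_sum_range (fun j => if j + 1 ≤ k then (1 : ℝ) else 0)]
              rw [← Finset.sum_filter]
              have : (Finset.range N).filter (fun j => j + 1 ≤ k) = Finset.range k := by
                ext j; simp only [mem_filter, mem_range]; omega
              rw [this]
              simp
      have hk0 : (k : ℝ) ≠ 0 := Nat.cast_ne_zero.mpr (by omega)
      exact mul_left_cancel₀ hk0 (key.trans (mul_one (k : ℝ)).symm)

end Stmt11Aux

open Stmt11Aux in
theorem stmt11 (n x : ℕ) (hx : 1 ≤ x) (hxn : x ≤ n) :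
    ∑ m ∈ (Fintype.piFinset fun _ : Fin n => Finset.range (n + 1)).filter
        (fun m => x ≤ ∑ i : Fin n, ((i : ℕ) + 1) * m i ∧
          ∑ i : Fin n, ((i : ℕ) + 1) * m i ≤ n),
      ∏ i : Fin n, (1 : ℝ) / (Nat.factorial (m i) * ((i : ℕ) + 1) ^ m i)
      = (n : ℝ) - x + 1 := by
  set A := (Fintype.piFinset fun _ : Fin n => Finset.range (n + 1)).filter
      (fun m => x ≤ ∑ i : Fin n, ((i : ℕ) + 1) * m i ∧
        ∑ i : Fin n, ((i : ℕ) + 1) * m i ≤ n) with hA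
  have hmaps : ∀ m ∈ A, wt n m ∈ Finset.Icc x n := by
    intro m hm
    obtain ⟨_, h1, h2⟩ := mem_filter.mp hm
    exact Finset.mem_Icc.mpr ⟨h1, h2⟩
  have := Finset.sum_fiberwise_of_maps_to hmaps (fun m => w n m)
  rw [show (∑ m ∈ A, ∏ i : Fin n, (1 : ℝ) / (Nat.factorial (m i) * ((i : ℕ) + 1) ^ m i))
      = ∑ m ∈ A, w n m from rfl, ← this]
  have hfib : ∀ k ∈ Finset.Icc x n, A.filter (fun m => wt n m = k) = T n k := by
    intro k hk
    obtain ⟨hk1, hk2⟩ := Finset.mem_Icc.mp hk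
    ext m
    rw [mem_filter, mem_filter, mem_T hk2]
    constructor
    · rintro ⟨_, h3⟩; exact h3
    · intro h
      have h1 := (mem_filter.mp ((mem_T hk2).mpr h)).1
      simp only [wt] at h
      exact ⟨⟨h1, by omega, by omega⟩, by simp only [wt]; exact h⟩
  rw [Finset.sum_congr rfl fun k hk => by rw [hfib k hk]]
  rw [Finset.sum_congr rfl fun k hk => S_eq_one n k (Finset.mem_Icc.mp hk).2]
  rw [Finset.sum_const, Nat.card_Icc, nsmul_eq_mul, mul_one]
  have : n + 1 - x = n - x + 1 := by omega
  rw [this]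
  push_cast [Nat.cast_sub hxn]
  ring
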